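/- Let A ∈ ℝ^{m×n}, let s, ε ∈ (0,1), and let T ⊆ {1,…,m} with |T| = s·m. Suppose that (a) for all x, y ∈ ℝ^n, (1/m)·‖|Ax|² − |Ay|²‖₁ ≤ √2·(1+ε)·‖x xᵀ − y yᵀ‖_F, and (b) for all x, y ∈ ℝ^n, (1/((1−s)·m))·‖(|Ax|² − |Ay|²)_{T^c}‖₁ ≥ 0.9·(1−ε)·‖x xᵀ − y yᵀ‖_F. Then for all x, y ∈ ℝ^n, ‖(|Ax|² − |Ay|²)_T‖₁ ≤ ψ·‖(|Ax|² − |Ay|²)_{T^c}‖₁, where ψ := (√2·(1+ε) − 0.9·(1−ε)·(1−s)) / (0.9·(1−ε)·(1−s)). -/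

import Mathlib

open Finset

/-- Frobenius norm of the rank-two matrix `x xᵀ - y yᵀ`. -/
noncomputable def frobXY {n : ℕ} (x y : Fin n → ℝ) : ℝ :=
  Real.sqrt (∑ i, ∑ j, (x i * x j - y i * y j) ^ 2)

theorem stmt_16 (m n : ℕ) (A : Fin m → Fin n → ℝ) (s ε : ℝ)
    (hs : s ∈ Set.Ioo (0:ℝ) 1) (hε : ε ∈ Set.Ioo (0:ℝ) 1)
    (T : Finset (Fin m)) (hT : (T.card : ℝ) = s * m)
    (ha : ∀ x y : Fin n → ℝ,
      (1 / m) * ∑ i, |(∑ j, A i j * x j) ^ 2 - (∑ j, A i j * y j) ^ 2| ≤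
        Real.sqrt 2 * (1 + ε) * frobXY x y)
    (hb : ∀ x y : Fin n → ℝ,
      (1 / ((1 - s) * m)) * ∑ i ∈ Tᶜ, |(∑ j, A i j * x j) ^ 2 - (∑ j, A i j * y j) ^ 2| ≥
        0.9 * (1 - ε) * frobXY x y) :
    ∀ x y : Fin n → ℝ,
      ∑ i ∈ T, |(∑ j, A i j * x j) ^ 2 - (∑ j, A i j * y j) ^ 2| ≤
        ((Real.sqrt 2 * (1 + ε) - 0.9 * (1 - ε) * (1 - s)) / (0.9 * (1 - ε) * (1 - s))) *
          ∑ i ∈ Tᶜ, |(∑ j, A i j * x j) ^ 2 - (∑ j, A i j * y j) ^ 2| := by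
  intro x y
  rcases Nat.eq_zero_or_pos m with hm | hm
  · subst hm
    have hT0 : T = ∅ := Finset.eq_empty_of_isEmpty T
    have hTc : Tᶜ = (∅ : Finset (Fin 0)) := Finset.eq_empty_of_isEmpty _
    simp [hT0, hTc]
  have hmpos : (0:ℝ) < m := by exact_mod_cast hm
  obtain ⟨hs0, hs1⟩ := hs
  obtain ⟨hε0, hε1⟩ := hε
  set S := ∑ i, |(∑ j, A i j * x j) ^ 2 - (∑ j, A i j * y j) ^ 2| with hS
  set Sc := ∑ i ∈ Tᶜ, |(∑ j, A i j * x j) ^ 2 - (∑ j, A i j * y j) ^ 2| with hSc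
  set ST := ∑ i ∈ T, |(∑ j, A i j * x j) ^ 2 - (∑ j, A i j * y j) ^ 2| with hST
  have hsplit : ST + Sc = S := by
    rw [hST, hSc, hS, Finset.sum_add_sum_compl]
  set F := frobXY x y with hF
  have h1s : (0:ℝ) < 1 - s := by linarith
  have h1ε : (0:ℝ) < 1 - ε := by linarith
  set c : ℝ := 0.9 * (1 - ε) * (1 - s) with hc
  have hcpos : 0 < c := by positivity
  have hSle : S ≤ Real.sqrt 2 * (1 + ε) * F * m := by
    have := ha x y
    rw [div_mul_eq_mul_div, div_le_iff₀ hmpos, ← hS, ← hF] at this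
    linarith
  have hScge : c * m * F ≤ Sc := by
    have := hb x y
    rw [ge_iff_le, div_mul_eq_mul_div, le_div_iff₀ (by positivity), ← hSc, ← hF] at this
    calc c * m * F = 0.9 * (1 - ε) * F * ((1 - s) * m) := by ring
    _ ≤ Sc := by linarith
  have hFnn : 0 ≤ F := Real.sqrt_nonneg _
  have key : ST ≤ (Real.sqrt 2 * (1 + ε) - c) / c * Sc := by
    have hST' : ST ≤ Real.sqrt 2 * (1 + ε) * F * m - Sc := by linarith
    have hmF : m * F ≤ Sc / c := by
      rw [le_div_iff₀ hcpos]; linarith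
    have h2 : 0 ≤ Real.sqrt 2 * (1 + ε) := by positivity
    have : Real.sqrt 2 * (1 + ε) * (m * F) ≤ Real.sqrt 2 * (1 + ε) * (Sc / c) :=
      mul_le_mul_of_nonneg_left hmF h2
    have heq : (Real.sqrt 2 * (1 + ε) - c) / c * Sc =
        Real.sqrt 2 * (1 + ε) * (Sc / c) - Sc := by
      field_simp
    rw [heq]
    have : Real.sqrt 2 * (1 + ε) * F * m ≤ Real.sqrt 2 * (1 + ε) * (Sc / c) := by
      calc Real.sqrt 2 * (1 + ε) * F * m = Real.sqrt 2 * (1 + ε) * (m * F) := by ring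
        _ ≤ _ := this
    linarith
  exact key
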